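/- Let $\mathfrak{g}$ be a semisimple Lie algebra with basis $(L_a)$ and Killing form inverse $k^{ab}$, and let $(T_b)_{b \in B}$ be additional generators. Define the bracket $[L_a, L_{a'}] = C^c{}_{aa'} L_c$, $[L_a, T_b] = 0$, and $[T_{b_1}, T_{b_2}] = \delta_{b_1 b_2} k^{a_1 a_2} L_{a_1} L_{a_2}$, extended to the polynomial algebra in the $L$'s and $T$'s by the Leibniz rule. Then this bracket satisfies the Jacobi identity. -/

import Mathlib

open MvPolynomial Finset

/-- The Killing form `k_{ab} = C^c_{ad} C^d_{bc}`. -/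
noncomputable def killing {n : ℕ} (Cc : Fin n → Fin n → Fin n → ℂ)
    (a b : Fin n) : ℂ :=
  ∑ c, ∑ d, Cc c a d * Cc d b c

/-- The bracket on the polynomial algebra in the `L`'s (variables `Sum.inl a`) and
`T`'s (variables `Sum.inr b`), determined by `[L_a, L_{a'}] = C^c_{aa'} L_c`,
`[L_a, T_b] = 0`, `[T_{b₁}, T_{b₂}] = δ_{b₁b₂} k^{a₁a₂} L_{a₁} L_{a₂}`,
extended by the Leibniz rule. -/
noncomputable def ltBracket {n m : ℕ} (Cc : Fin n → Fin n → Fin n → ℂ)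
    (kInv : Fin n → Fin n → ℂ)
    (f g : MvPolynomial (Fin n ⊕ Fin m) ℂ) : MvPolynomial (Fin n ⊕ Fin m) ℂ :=
  (∑ a, ∑ a', ∑ c, Cc c a a' •
      (X (Sum.inl c) * ((pderiv (Sum.inl a)) f * (pderiv (Sum.inl a')) g)))
  + ∑ b : Fin m,
      (∑ a1, ∑ a2, kInv a1 a2 • (X (Sum.inl a1) * X (Sum.inl a2))) *
        ((pderiv (Sum.inr b)) f * (pderiv (Sum.inr b)) g)

/-! ### Auxiliary algebraic lemmas -/

lemma killing_symm {n : ℕ} (Cc : Fin n → Fin n → Fin n → ℂ) (a b : Fin n) :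
    killing Cc a b = killing Cc b a := by
  unfold killing
  rw [Finset.sum_comm]
  exact Finset.sum_congr rfl fun c _ => Finset.sum_congr rfl fun d _ => by ring

section Alg
variable {n : ℕ} (Cc : Fin n → Fin n → Fin n → ℂ)
    (hanti : ∀ c a b, Cc c a b = - Cc c b a)
    (kInv : Fin n → Fin n → ℂ)
    (hkInvSym : ∀ a b, kInv a b = kInv b a)
    (hkInv : ∀ a c, ∑ b, killing Cc a b * kInv b c = if a = c then 1 else 0)
    (hinvariant : ∀ a b c, ∑ d,
      (Cc d a b * killing Cc d c + Cc d a c * killing Cc b d) = 0)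

include hkInvSym hkInv in
lemma kInv_killing (a c : Fin n) :
    ∑ b, kInv a b * killing Cc b c = if a = c then 1 else 0 := by
  have := hkInv c a
  rw [show ((if c = a then (1:ℂ) else 0) = if a = c then 1 else 0) by
    by_cases h : a = c <;> simp [h, eq_comm] ] at this
  rw [← this]
  exact Finset.sum_congr rfl fun b _ => by rw [killing_symm, hkInvSym]; ring

include hinvariant in
lemma inv_step (p a r : Fin n) :
    ∑ d, Cc d p a * killing Cc d r = - ∑ d, Cc d p r * killing Cc a d := by
  have := hinvariant p a r
  rw [Finset.sum_add_distrib] at this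
  linear_combination this

include hkInvSym hkInv hinvariant in
lemma Cc_expand (c p a : Fin n) :
    Cc c p a = - ∑ r, ∑ d, kInv c r * (killing Cc a d * Cc d p r) := by
  have h1 : Cc c p a = ∑ e, (∑ r, kInv c r * killing Cc r e) * Cc e p a := by
    rw [show Cc c p a = ∑ e, (if c = e then (1:ℂ) else 0) * Cc e p a by
      simp [Finset.sum_ite_eq]]
    exact Finset.sum_congr rfl fun e _ => by rw [kInv_killing Cc kInv hkInvSym hkInv]
  rw [h1]
  simp only [Finset.sum_mul, mul_assoc]
  rw [Finset.sum_comm]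
  rw [← Finset.sum_neg_distrib]
  refine Finset.sum_congr rfl fun r _ => ?_
  rw [← Finset.mul_sum, ← Finset.mul_sum, ← mul_neg]
  congr 1
  have := inv_step Cc hinvariant p a r
  calc ∑ e, killing Cc r e * Cc e p a = ∑ e, Cc e p a * killing Cc e r := by
        exact Finset.sum_congr rfl fun e _ => by rw [killing_symm]; ring
    _ = - ∑ d, Cc d p r * killing Cc a d := this
    _ = - ∑ d, killing Cc a d * Cc d p r := by
        rw [neg_inj]; exact Finset.sum_congr rfl fun d _ => by ring

include hanti hkInvSym hkInv hinvariant in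
lemma inv_invariant (a c q : Fin n) :
    (∑ p, Cc c p a * kInv p q) + (∑ p, Cc q p a * kInv p c) = 0 := by
  have key : ∀ c q, ∑ p, Cc c p a * kInv p q
      = - ∑ p, ∑ r, ∑ d, kInv c r * (killing Cc a d * Cc d p r) * kInv p q := by
    intro c q
    rw [← Finset.sum_neg_distrib]
    refine Finset.sum_congr rfl fun p _ => ?_
    rw [Cc_expand Cc kInv hkInvSym hkInv hinvariant c p a]
    simp only [Finset.sum_mul, neg_mul, Finset.sum_neg_distrib]
  rw [key c q, key q c]
  have swap : ∑ p, ∑ r, ∑ d, kInv q r * (killing Cc a d * Cc d p r) * kInv p c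
      = - ∑ p, ∑ r, ∑ d, kInv c r * (killing Cc a d * Cc d p r) * kInv p q := by
    rw [Finset.sum_comm, ← Finset.sum_neg_distrib]
    refine Finset.sum_congr rfl fun p _ => ?_
    rw [← Finset.sum_neg_distrib]
    refine Finset.sum_congr rfl fun r _ => ?_
    rw [← Finset.sum_neg_distrib]
    refine Finset.sum_congr rfl fun d _ => ?_
    rw [hanti d r p, hkInvSym q p, hkInvSym r c]
    ring
  rw [swap]
  ring

end Alg

/-! ### Auxiliary polynomial lemmas -/

lemma pderiv_X_ite {σ : Type*} [DecidableEq σ] (i j : σ) :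
    pderiv i (X j : MvPolynomial σ ℂ) = if j = i then 1 else 0 := by
  simp [pderiv_X, Pi.single_apply]

/-- the Casimir polynomial -/
noncomputable def casimirQ {n m : ℕ} (kInv : Fin n → Fin n → ℂ) :
    MvPolynomial (Fin n ⊕ Fin m) ℂ :=
  ∑ a1, ∑ a2, kInv a1 a2 • (X (Sum.inl a1) * X (Sum.inl a2))

section Poly
variable {n m : ℕ} (Cc : Fin n → Fin n → Fin n → ℂ) (kInv : Fin n → Fin n → ℂ)

lemma ltBracket_zero_left (g) : ltBracket (m := m) Cc kInv 0 g = 0 := by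
  simp [ltBracket]

lemma ltBracket_zero_right (f) : ltBracket (m := m) Cc kInv f 0 = 0 := by
  simp [ltBracket]

lemma brLL (a a' : Fin n) :
    ltBracket (m := m) Cc kInv (X (Sum.inl a)) (X (Sum.inl a'))
      = ∑ c, Cc c a a' • X (Sum.inl c) := by
  simp [ltBracket, Pi.single_apply, Finset.sum_ite_eq, Finset.sum_ite_eq']

lemma brLR (a : Fin n) (b : Fin m) :
    ltBracket (m := m) Cc kInv (X (Sum.inl a)) (X (Sum.inr b)) = 0 := by
  simp [ltBracket, pderiv_X_ite]

lemma brRL (a : Fin n) (b : Fin m) :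
    ltBracket (m := m) Cc kInv (X (Sum.inr b)) (X (Sum.inl a)) = 0 := by
  simp [ltBracket, pderiv_X_ite]

lemma brRR (b1 b2 : Fin m) :
    ltBracket (m := m) Cc kInv (X (Sum.inr b1)) (X (Sum.inr b2))
      = if b1 = b2 then casimirQ (m := m) kInv else 0 := by
  simp [ltBracket, Pi.single_apply, casimirQ, Finset.sum_ite_eq, eq_comm]

lemma ltBracket_add_left (f1 f2 g) :
    ltBracket (m := m) Cc kInv (f1 + f2) g
      = ltBracket Cc kInv f1 g + ltBracket Cc kInv f2 g := by
  simp only [ltBracket, map_add, add_mul, mul_add, smul_add, Finset.sum_add_distrib]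
  ring

lemma ltBracket_smul_left (c : ℂ) (f g) :
    ltBracket (m := m) Cc kInv (c • f) g = c • ltBracket Cc kInv f g := by
  simp only [ltBracket, Derivation.map_smul, smul_mul_assoc, mul_smul_comm, smul_add,
    Finset.smul_sum, smul_smul]
  congr 1
  · exact Finset.sum_congr rfl fun a _ => Finset.sum_congr rfl fun a' _ =>
      Finset.sum_congr rfl fun c' _ => by rw [mul_comm]

lemma ltBracket_sum_left {ι : Type*} (s : Finset ι) (f : ι → MvPolynomial (Fin n ⊕ Fin m) ℂ)
    (g) : ltBracket (m := m) Cc kInv (∑ i ∈ s, f i) g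
      = ∑ i ∈ s, ltBracket Cc kInv (f i) g := by
  classical
  induction s using Finset.induction with
  | empty => simp [ltBracket_zero_left]
  | insert _ _ h ih => rw [Finset.sum_insert h, ltBracket_add_left, ih, Finset.sum_insert h]

lemma pderiv_casimir_inr (b : Fin m) :
    pderiv (Sum.inr b) (casimirQ (m := m) kInv) = 0 := by
  simp [casimirQ, pderiv_mul]

lemma pderiv_casimir_inl (p : Fin n) :
    pderiv (Sum.inl p) (casimirQ (m := m) kInv)
      = ∑ q, (kInv p q + kInv q p) • X (Sum.inl q) := by
  simp [casimirQ, pderiv_mul, Pi.single_apply, Finset.sum_ite_eq, Finset.sum_ite_eq',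
    add_smul, Finset.sum_add_distrib, mul_comm]
  abel

lemma antisym_pair_sum (h : Fin n → Fin n → ℂ) (hh : ∀ c q, h c q + h q c = 0) :
    (∑ c, ∑ q, h c q • (X (Sum.inl c) * X (Sum.inl q)) : MvPolynomial (Fin n ⊕ Fin m) ℂ)
      = 0 := by
  set S : MvPolynomial (Fin n ⊕ Fin m) ℂ :=
    ∑ c, ∑ q, h c q • (X (Sum.inl c) * X (Sum.inl q)) with hS
  have hswap : S = ∑ c, ∑ q, h q c • (X (Sum.inl c) * X (Sum.inl q)) := by
    rw [hS, Finset.sum_comm]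
    exact Finset.sum_congr rfl fun c _ => Finset.sum_congr rfl fun q _ => by
      rw [mul_comm]
  have h2 : S + S = 0 := by
    nth_rewrite 2 [hswap]
    rw [hS, ← Finset.sum_add_distrib]
    rw [show (0 : MvPolynomial (Fin n ⊕ Fin m) ℂ)
        = ∑ c : Fin n, 0 from (Finset.sum_const_zero).symm]
    refine Finset.sum_congr rfl fun c _ => ?_
    rw [← Finset.sum_add_distrib]
    rw [show (0 : MvPolynomial (Fin n ⊕ Fin m) ℂ)
        = ∑ q : Fin n, 0 from (Finset.sum_const_zero).symm]
    refine Finset.sum_congr rfl fun q _ => ?_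
    rw [← add_smul, hh c q, zero_smul]
  have := congrArg (fun x => ((1:ℂ)/2) • x) h2
  simpa [smul_add, ← two_smul ℂ S, smul_smul] using this

lemma brQ_R (b : Fin m) :
    ltBracket (m := m) Cc kInv (casimirQ (m := m) kInv) (X (Sum.inr b)) = 0 := by
  simp [ltBracket, pderiv_casimir_inr, Pi.single_apply]

lemma brQ_L (hkInvSym : ∀ a b, kInv a b = kInv b a)
    (hinv2 : ∀ e c q, (∑ p, Cc c p e * kInv p q) + (∑ p, Cc q p e * kInv p c) = 0)
    (e : Fin n) :
    ltBracket (m := m) Cc kInv (casimirQ (m := m) kInv) (X (Sum.inl e)) = 0 := by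
  have step1 : ltBracket (m := m) Cc kInv (casimirQ (m := m) kInv) (X (Sum.inl e))
      = ∑ p, ∑ c, ∑ q, (Cc c p e * (kInv p q + kInv q p))
          • (X (Sum.inl c) * X (Sum.inl q)) := by
    simp only [ltBracket, pderiv_casimir_inr, pderiv_casimir_inl, pderiv_X,
      Pi.single_apply, zero_mul, mul_zero, Finset.sum_const_zero, add_zero]
    refine Finset.sum_congr rfl fun p _ => ?_
    rw [Finset.sum_comm]
    refine Finset.sum_congr rfl fun c _ => ?_
    rw [show (∑ a', Cc c p a' • (X (Sum.inl c) *
          ((∑ q, (kInv p q + kInv q p) • X (Sum.inl q)) *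
            if (Sum.inl e : Fin n ⊕ Fin m) = Sum.inl a'
            then (1 : MvPolynomial (Fin n ⊕ Fin m) ℂ) else 0)))
        = ∑ a', if e = a' then Cc c p a' • (X (Sum.inl c) *
            (∑ q, (kInv p q + kInv q p) • X (Sum.inl q))) else 0 from
      Finset.sum_congr rfl fun a' _ => by by_cases h : e = a' <;> simp [h]]
    rw [Finset.sum_ite_eq]
    simp [Finset.mul_sum, mul_smul_comm, smul_smul, Finset.smul_sum]
  rw [step1]
  have step2 : (∑ p, ∑ c, ∑ q, (Cc c p e * (kInv p q + kInv q p))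
        • (X (Sum.inl c) * X (Sum.inl q)) : MvPolynomial (Fin n ⊕ Fin m) ℂ)
      = ∑ c, ∑ q, (∑ p, Cc c p e * (kInv p q + kInv q p))
        • (X (Sum.inl c) * X (Sum.inl q)) := by
    rw [Finset.sum_comm]
    refine Finset.sum_congr rfl fun c _ => ?_
    rw [Finset.sum_comm]
    refine Finset.sum_congr rfl fun q _ => ?_
    rw [Finset.sum_smul]
  rw [step2]
  refine antisym_pair_sum _ (fun c q => ?_)
  have h1 := hinv2 e c q
  have h2 : ∀ c q, (∑ p, Cc c p e * (kInv p q + kInv q p))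
      = 2 * ∑ p, Cc c p e * kInv p q := by
    intro c q
    rw [Finset.mul_sum]
    exact Finset.sum_congr rfl fun p _ => by rw [hkInvSym q p]; ring
  rw [h2 c q, h2 q c]
  linear_combination 2 * h1

lemma brXlin_R (s : Fin n → ℂ) (r : Fin m) :
    ltBracket (m := m) Cc kInv (∑ c, s c • X (Sum.inl c)) (X (Sum.inr r)) = 0 := by
  rw [ltBracket_sum_left]
  exact Finset.sum_eq_zero fun c _ => by rw [ltBracket_smul_left, brLR, smul_zero]

lemma br_iteQ {c : Prop} [Decidable c] (g)
    (hg : ltBracket (m := m) Cc kInv (casimirQ (m := m) kInv) g = 0) :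
    ltBracket (m := m) Cc kInv (if c then casimirQ (m := m) kInv else 0) g = 0 := by
  split
  · exact hg
  · exact ltBracket_zero_left Cc kInv g

end Poly

/-- the L-T bracket (semisimple `L`-sector, `[L,T] = 0`, `T`'s
closing on the Casimir) satisfies the Jacobi identity on the generators. -/
theorem lt_bracket_jacobi {n m : ℕ} (Cc : Fin n → Fin n → Fin n → ℂ)
    (hanti : ∀ c a b, Cc c a b = - Cc c b a)
    (hjac : ∀ a b c e, ∑ d,
      (Cc d a b * Cc e d c + Cc d b c * Cc e d a + Cc d c a * Cc e d b) = 0)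
    (kInv : Fin n → Fin n → ℂ)
    (hkInvSym : ∀ a b, kInv a b = kInv b a)
    (hkInv : ∀ a c, ∑ b, killing Cc a b * kInv b c = if a = c then 1 else 0)
    (hinvariant : ∀ a b c, ∑ d,
      (Cc d a b * killing Cc d c + Cc d a c * killing Cc b d) = 0) :
    ∀ i j k : Fin n ⊕ Fin m,
      ltBracket (m := m) Cc kInv (ltBracket Cc kInv (X i) (X j)) (X k)
      + ltBracket (m := m) Cc kInv (ltBracket Cc kInv (X j) (X k)) (X i)
      + ltBracket (m := m) Cc kInv (ltBracket Cc kInv (X k) (X i)) (X j) = 0 := by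
  have hinv2 : ∀ e c q, (∑ p, Cc c p e * kInv p q) + (∑ p, Cc q p e * kInv p c) = 0 :=
    fun e c q => inv_invariant Cc hanti kInv hkInvSym hkInv hinvariant e c q
  have hQL := brQ_L (m := m) Cc kInv hkInvSym hinv2
  have hQR := brQ_R (m := m) Cc kInv
  intro i j k
  rcases i with a | r1 <;> rcases j with b | r2 <;> rcases k with e | r3
  · -- L L L
    rw [brLL, brLL, brLL, ltBracket_sum_left, ltBracket_sum_left, ltBracket_sum_left]
    simp only [ltBracket_smul_left, brLL, Finset.smul_sum, smul_smul]
    have swap : ∀ u : Fin n → Fin n → ℂ,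
        (∑ c, ∑ d, (u c d) • X (Sum.inl d) : MvPolynomial (Fin n ⊕ Fin m) ℂ)
          = ∑ d, (∑ c, u c d) • X (Sum.inl d) := by
      intro u
      rw [Finset.sum_comm]
      exact Finset.sum_congr rfl fun d _ => (Finset.sum_smul).symm
    rw [swap, swap, swap, ← Finset.sum_add_distrib, ← Finset.sum_add_distrib]
    refine Finset.sum_eq_zero fun d _ => ?_
    rw [← add_smul, ← add_smul, ← Finset.sum_add_distrib, ← Finset.sum_add_distrib,
      hjac a b e d, zero_smul]
  · -- L L R
    rw [brLL, brLR, brRL, ltBracket_zero_left, ltBracket_zero_left, brXlin_R]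
    simp
  · -- L R L
    rw [brLR, brRL, brLL, ltBracket_zero_left, ltBracket_zero_left, brXlin_R]
    simp
  · -- L R R
    rw [brLR, brRR, brRL, ltBracket_zero_left, ltBracket_zero_left,
      br_iteQ Cc kInv _ (hQL a)]
    simp
  · -- R L L
    rw [brRL, brLL, brLR, ltBracket_zero_left, ltBracket_zero_left, brXlin_R]
    simp
  · -- R L R
    rw [brRL, brLR, brRR, ltBracket_zero_left, ltBracket_zero_left,
      br_iteQ Cc kInv _ (hQL b)]
    simp
  · -- R R L
    rw [brRR, brRL, brLR, ltBracket_zero_left, ltBracket_zero_left,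
      br_iteQ Cc kInv _ (hQL e)]
    simp
  · -- R R R
    rw [brRR, brRR, brRR, br_iteQ Cc kInv _ (hQR r1), br_iteQ Cc kInv _ (hQR r2),
      br_iteQ Cc kInv _ (hQR r3)]
    simp
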